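/- Let G be a finite graph whose vertex set is partitioned into two sets C and R, such that C induces a chordless cycle of length 4 or 5 in G and R induces a complete graph in G (the edges between C and R being arbitrary). Then G has boxicity at most 3. -/

import Mathlib

/-- `lo, hi : V → Fin d → ℝ` give a `d`-box representation of `G`. -/
def IsBoxRep {V : Type*} {d : ℕ} (G : SimpleGraph V) (lo hi : V → Fin d → ℝ) : Prop :=
  (∀ v, lo v ≤ hi v) ∧
    ∀ u v : V, u ≠ v →
      (G.Adj u v ↔ (Set.Icc (lo u) (hi u) ∩ Set.Icc (lo v) (hi v)).Nonempty)

/-- `G` has a `d`-box representation. -/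
def HasBoxRep {V : Type*} (G : SimpleGraph V) (d : ℕ) : Prop :=
  ∃ lo hi : V → Fin d → ℝ, IsBoxRep G lo hi

/-- The boxicity of `G`: the least `d` such that `G` has a `d`-box representation. -/
noncomputable def boxicity {V : Type*} (G : SimpleGraph V) : ℕ :=
  sInf {d | HasBoxRep G d}

lemma box_inter {d : ℕ} {a b c e : Fin d → ℝ} :
    (Set.Icc a b ∩ Set.Icc c e).Nonempty ↔ ∀ i, max (a i) (c i) ≤ min (b i) (e i) := by
  constructor
  · rintro ⟨x, ⟨hx1, hx2⟩, hx3, hx4⟩ i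
    exact le_trans (max_le (hx1 i) (hx3 i)) (le_min (hx2 i) (hx4 i))
  · intro h
    refine ⟨fun i => max (a i) (c i),
      ⟨fun i => le_max_left _ _, fun i => (h i).trans (min_le_left _ _)⟩,
      fun i => le_max_right _ _, fun i => (h i).trans (min_le_right _ _)⟩

lemma forall_fin3 {P : Fin 3 → Prop} : (∀ j, P j) ↔ P 0 ∧ P 1 ∧ P 2 :=
  ⟨fun h => ⟨h 0, h 1, h 2⟩, fun ⟨h0, h1, h2⟩ j => by fin_cases j <;> assumption⟩

set_option maxHeartbeats 2000000 in
lemma mix4 (p0 p1 p2 p3 : Prop) [Decidable p0] [Decidable p1] [Decidable p2]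
    [Decidable p3] (i : Fin 4) :
    (![p0, p1, p2, p3] i) ↔ ∀ jj : Fin 3,
      max ((![![-2,-2,0], ![-2,-2,0], ![1,-2,0], ![-2,1,0]] : Fin 4 → Fin 3 → ℝ) i jj)
          ((![if p0 then -1 else -(1/2), if p1 then -1 else -(1/2), 0] : Fin 3 → ℝ) jj)
        ≤ min ((![![-1,2,1], ![2,-1,1], ![2,2,1], ![2,2,1]] : Fin 4 → Fin 3 → ℝ) i jj)
          ((![if p2 then 1 else 1/2, if p3 then 1 else 1/2, 1] : Fin 3 → ℝ) jj) := by
  rw [forall_fin3]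
  by_cases h0 : p0 <;> by_cases h1 : p1 <;> by_cases h2 : p2 <;> by_cases h3 : p3 <;>
    fin_cases i <;> norm_num [h0, h1, h2, h3, Matrix.cons_val_two, Matrix.tail_cons, Matrix.head_cons]

set_option maxHeartbeats 2000000 in
lemma mix5 (p0 p1 p2 p3 p4 : Prop) [Decidable p0] [Decidable p1] [Decidable p2]
    [Decidable p3] [Decidable p4] (i : Fin 5) :
    (![p0, p1, p2, p3, p4] i) ↔ ∀ jj : Fin 3,
      max ((![![-2,-2,-2], ![-2,-2,-2], ![1,-2,-2], ![2,2,-2], ![-2,1,1]] : Fin 5 → Fin 3 → ℝ) i jj)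
          ((![if p0 then -1 else -(1/2), if p1 then -1 else -(1/2), if p2 then -1 else -(1/2)] : Fin 3 → ℝ) jj)
        ≤ min ((![![-1,4,2], ![4,-1,2], ![4,4,-1], ![3,3,2], ![4,4,2]] : Fin 5 → Fin 3 → ℝ) i jj)
          ((![if p3 then 2 else if p2 then 3/2 else 1/2,
              if p3 then 2 else if p4 then 3/2 else 1/2,
              if p4 then 1 else 1/2] : Fin 3 → ℝ) jj) := by
  rw [forall_fin3]
  by_cases h0 : p0 <;> by_cases h1 : p1 <;> by_cases h2 : p2 <;>
    by_cases h3 : p3 <;> by_cases h4 : p4 <;>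
    fin_cases i <;> norm_num [h0, h1, h2, h3, h4, Matrix.cons_val_two, Matrix.tail_cons, Matrix.head_cons]


set_option maxHeartbeats 1000000 in
lemma cyc4 (i j : Fin 4) (hij : i ≠ j) :
    ((((i : ℕ) + 1) % 4 = (j : ℕ) ∨ ((j : ℕ) + 1) % 4 = (i : ℕ)) ↔ ∀ jj : Fin 3,
      max ((![![-2,-2,0], ![-2,-2,0], ![1,-2,0], ![-2,1,0]] : Fin 4 → Fin 3 → ℝ) i jj)
          ((![![-2,-2,0], ![-2,-2,0], ![1,-2,0], ![-2,1,0]] : Fin 4 → Fin 3 → ℝ) j jj)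
        ≤ min ((![![-1,2,1], ![2,-1,1], ![2,2,1], ![2,2,1]] : Fin 4 → Fin 3 → ℝ) i jj)
          ((![![-1,2,1], ![2,-1,1], ![2,2,1], ![2,2,1]] : Fin 4 → Fin 3 → ℝ) j jj)) := by
  rw [forall_fin3]
  fin_cases i <;> fin_cases j <;>
    first
      | exact absurd rfl hij
      | norm_num [Matrix.cons_val_two, Matrix.tail_cons, Matrix.head_cons]

set_option maxHeartbeats 1000000 in
lemma cyc5 (i j : Fin 5) (hij : i ≠ j) :
    ((((i : ℕ) + 1) % 5 = (j : ℕ) ∨ ((j : ℕ) + 1) % 5 = (i : ℕ)) ↔ ∀ jj : Fin 3,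
      max ((![![-2,-2,-2], ![-2,-2,-2], ![1,-2,-2], ![2,2,-2], ![-2,1,1]] : Fin 5 → Fin 3 → ℝ) i jj)
          ((![![-2,-2,-2], ![-2,-2,-2], ![1,-2,-2], ![2,2,-2], ![-2,1,1]] : Fin 5 → Fin 3 → ℝ) j jj)
        ≤ min ((![![-1,4,2], ![4,-1,2], ![4,4,-1], ![3,3,2], ![4,4,2]] : Fin 5 → Fin 3 → ℝ) i jj)
          ((![![-1,4,2], ![4,-1,2], ![4,4,-1], ![3,3,2], ![4,4,2]] : Fin 5 → Fin 3 → ℝ) j jj)) := by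
  rw [forall_fin3]
  fin_cases i <;> fin_cases j <;>
    first
      | exact absurd rfl hij
      | norm_num [Matrix.cons_val_two, Matrix.tail_cons, Matrix.head_cons]

set_option maxHeartbeats 1000000 in
lemma rr4 (p0 p1 p2 p3 q0 q1 q2 q3 : Prop) [Decidable p0] [Decidable p1] [Decidable p2]
    [Decidable p3] [Decidable q0] [Decidable q1] [Decidable q2] [Decidable q3] :
    ∀ jj : Fin 3,
      max ((![if p0 then -1 else -(1/2), if p1 then -1 else -(1/2), 0] : Fin 3 → ℝ) jj)
          ((![if q0 then -1 else -(1/2), if q1 then -1 else -(1/2), 0] : Fin 3 → ℝ) jj)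
        ≤ min ((![if p2 then 1 else 1/2, if p3 then 1 else 1/2, 1] : Fin 3 → ℝ) jj)
          ((![if q2 then 1 else 1/2, if q3 then 1 else 1/2, 1] : Fin 3 → ℝ) jj) := by
  intro jj
  fin_cases jj <;> simp only <;> split_ifs <;> norm_num

set_option maxHeartbeats 1000000 in
lemma rr5 (p0 p1 p2 p3 p4 q0 q1 q2 q3 q4 : Prop) [Decidable p0] [Decidable p1] [Decidable p2]
    [Decidable p3] [Decidable p4] [Decidable q0] [Decidable q1] [Decidable q2] [Decidable q3]
    [Decidable q4] :
    ∀ jj : Fin 3,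
      max ((![if p0 then -1 else -(1/2), if p1 then -1 else -(1/2), if p2 then -1 else -(1/2)] : Fin 3 → ℝ) jj)
          ((![if q0 then -1 else -(1/2), if q1 then -1 else -(1/2), if q2 then -1 else -(1/2)] : Fin 3 → ℝ) jj)
        ≤ min ((![if p3 then 2 else if p2 then 3/2 else 1/2,
              if p3 then 2 else if p4 then 3/2 else 1/2,
              if p4 then 1 else 1/2] : Fin 3 → ℝ) jj)
          ((![if q3 then 2 else if q2 then 3/2 else 1/2,
              if q3 then 2 else if q4 then 3/2 else 1/2,
              if q4 then 1 else 1/2] : Fin 3 → ℝ) jj) := by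
  intro jj
  fin_cases jj <;>
    simp only [Matrix.cons_val_zero, Matrix.cons_val_one, Matrix.head_cons,
      Matrix.cons_val_two, Matrix.tail_cons, Matrix.cons_val_succ', Fin.mk_zero,
      Fin.mk_one, Matrix.cons_val_zero'] <;>
    split_ifs <;> norm_num

set_option maxHeartbeats 2000000 in
lemma aux_box4 {V : Type*} (G : SimpleGraph V) (vc : Fin 4 → V) (hinj : Function.Injective vc)
    (hcyc : ∀ i j : Fin 4,
      G.Adj (vc i) (vc j) ↔ (((i : ℕ) + 1) % 4 = (j : ℕ) ∨ ((j : ℕ) + 1) % 4 = (i : ℕ)))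
    (hclique : ∀ u w : V, u ∉ Set.range vc → w ∉ Set.range vc → u ≠ w → G.Adj u w) :
    HasBoxRep G 3 := by
  classical
  set clo : Fin 4 → Fin 3 → ℝ := ![![-2,-2,0], ![-2,-2,0], ![1,-2,0], ![-2,1,0]] with hclo
  set chi : Fin 4 → Fin 3 → ℝ := ![![-1,2,1], ![2,-1,1], ![2,2,1], ![2,2,1]] with hchi
  set rlo : V → Fin 3 → ℝ := fun v =>
    ![if G.Adj v (vc 0) then -1 else -(1/2), if G.Adj v (vc 1) then -1 else -(1/2), 0] with hrlo
  set rhi : V → Fin 3 → ℝ := fun v =>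
    ![if G.Adj v (vc 2) then 1 else 1/2, if G.Adj v (vc 3) then 1 else 1/2, 1] with hrhi
  set lo : V → Fin 3 → ℝ := fun v => if h : ∃ i, vc i = v then clo h.choose else rlo v with hlo
  set hi : V → Fin 3 → ℝ := fun v => if h : ∃ i, vc i = v then chi h.choose else rhi v with hhi
  have hchoose : ∀ (i : Fin 4) (h : ∃ j, vc j = vc i), h.choose = i := fun i h => hinj h.choose_spec
  have hLc : ∀ i : Fin 4, lo (vc i) = clo i := by
    intro i
    rw [hlo]
    simp only
    rw [dif_pos ⟨i, rfl⟩, hchoose]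
  have hHc : ∀ i : Fin 4, hi (vc i) = chi i := by
    intro i
    rw [hhi]
    simp only
    rw [dif_pos ⟨i, rfl⟩, hchoose]
  have hLr : ∀ v, (¬ ∃ i, vc i = v) → lo v = rlo v := by
    intro v hv; rw [hlo]; simp only; rw [dif_neg hv]
  have hHr : ∀ v, (¬ ∃ i, vc i = v) → hi v = rhi v := by
    intro v hv; rw [hhi]; simp only; rw [dif_neg hv]
  clear_value clo chi rlo rhi lo hi
  have hmix : ∀ (i : Fin 4) (w : V),
      (G.Adj (vc i) w ↔ ∀ jj : Fin 3, max (clo i jj) (rlo w jj) ≤ min (chi i jj) (rhi w jj)) := by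
    intro i w
    rw [G.adj_comm]
    have hsel : G.Adj w (vc i) ↔
        (![G.Adj w (vc 0), G.Adj w (vc 1), G.Adj w (vc 2), G.Adj w (vc 3)] i) := by
      fin_cases i <;> exact Iff.rfl
    rw [hsel, hclo, hchi, hrlo, hrhi]
    exact mix4 _ _ _ _ i
  refine ⟨lo, hi, ?_, ?_⟩
  · intro v
    by_cases h : ∃ i, vc i = v
    · obtain ⟨i, rfl⟩ := h
      rw [hLc, hHc, Pi.le_def, hclo, hchi]
      fin_cases i <;> (intro j; fin_cases j) <;> norm_num
    · rw [hLr v h, hHr v h, Pi.le_def, hrlo, hrhi]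
      intro j
      fin_cases j <;> simp only <;> split_ifs <;> norm_num
  · intro u v huv
    by_cases hu : ∃ i, vc i = u <;> by_cases hv : ∃ i, vc i = v
    · obtain ⟨i, rfl⟩ := hu
      obtain ⟨j, rfl⟩ := hv
      have hij : i ≠ j := fun e => huv (congrArg vc e)
      rw [hLc, hHc, hLc, hHc, box_inter, hcyc, hclo, hchi]
      exact cyc4 i j hij
    · obtain ⟨i, rfl⟩ := hu
      rw [hLc, hHc, hLr v hv, hHr v hv, box_inter]
      exact hmix i v
    · obtain ⟨j, rfl⟩ := hv
      rw [hLr u hu, hHr u hu, hLc, hHc, box_inter, G.adj_comm, hmix j u]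
      constructor <;> (intro h jj; have := h jj; rw [max_comm, min_comm]; linarith [this])
    · have hadj := hclique u v (by simpa [Set.mem_range] using hu)
        (by simpa [Set.mem_range] using hv) huv
      rw [hLr u hu, hHr u hu, hLr v hv, hHr v hv, box_inter]
      simp only [hadj, true_iff, hrlo, hrhi]
      exact rr4 _ _ _ _ _ _ _ _

set_option maxHeartbeats 2000000 in
lemma aux_box5 {V : Type*} (G : SimpleGraph V) (vc : Fin 5 → V) (hinj : Function.Injective vc)
    (hcyc : ∀ i j : Fin 5,
      G.Adj (vc i) (vc j) ↔ (((i : ℕ) + 1) % 5 = (j : ℕ) ∨ ((j : ℕ) + 1) % 5 = (i : ℕ)))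
    (hclique : ∀ u w : V, u ∉ Set.range vc → w ∉ Set.range vc → u ≠ w → G.Adj u w) :
    HasBoxRep G 3 := by
  classical
  set clo : Fin 5 → Fin 3 → ℝ :=
    ![![-2,-2,-2], ![-2,-2,-2], ![1,-2,-2], ![2,2,-2], ![-2,1,1]] with hclo
  set chi : Fin 5 → Fin 3 → ℝ :=
    ![![-1,4,2], ![4,-1,2], ![4,4,-1], ![3,3,2], ![4,4,2]] with hchi
  set rlo : V → Fin 3 → ℝ := fun v =>
    ![if G.Adj v (vc 0) then -1 else -(1/2), if G.Adj v (vc 1) then -1 else -(1/2),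
      if G.Adj v (vc 2) then -1 else -(1/2)] with hrlo
  set rhi : V → Fin 3 → ℝ := fun v =>
    ![if G.Adj v (vc 3) then 2 else if G.Adj v (vc 2) then 3/2 else 1/2,
      if G.Adj v (vc 3) then 2 else if G.Adj v (vc 4) then 3/2 else 1/2,
      if G.Adj v (vc 4) then 1 else 1/2] with hrhi
  set lo : V → Fin 3 → ℝ := fun v => if h : ∃ i, vc i = v then clo h.choose else rlo v with hlo
  set hi : V → Fin 3 → ℝ := fun v => if h : ∃ i, vc i = v then chi h.choose else rhi v with hhi
  have hchoose : ∀ (i : Fin 5) (h : ∃ j, vc j = vc i), h.choose = i := fun i h => hinj h.choose_spec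
  have hLc : ∀ i : Fin 5, lo (vc i) = clo i := by
    intro i
    rw [hlo]
    simp only
    rw [dif_pos ⟨i, rfl⟩, hchoose]
  have hHc : ∀ i : Fin 5, hi (vc i) = chi i := by
    intro i
    rw [hhi]
    simp only
    rw [dif_pos ⟨i, rfl⟩, hchoose]
  have hLr : ∀ v, (¬ ∃ i, vc i = v) → lo v = rlo v := by
    intro v hv; rw [hlo]; simp only; rw [dif_neg hv]
  have hHr : ∀ v, (¬ ∃ i, vc i = v) → hi v = rhi v := by
    intro v hv; rw [hhi]; simp only; rw [dif_neg hv]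
  clear_value clo chi rlo rhi lo hi
  have hmix : ∀ (i : Fin 5) (w : V),
      (G.Adj (vc i) w ↔ ∀ jj : Fin 3, max (clo i jj) (rlo w jj) ≤ min (chi i jj) (rhi w jj)) := by
    intro i w
    rw [G.adj_comm]
    have hsel : G.Adj w (vc i) ↔
        (![G.Adj w (vc 0), G.Adj w (vc 1), G.Adj w (vc 2), G.Adj w (vc 3), G.Adj w (vc 4)] i) := by
      fin_cases i <;> exact Iff.rfl
    rw [hsel, hclo, hchi, hrlo, hrhi]
    exact mix5 _ _ _ _ _ i
  refine ⟨lo, hi, ?_, ?_⟩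
  · intro v
    by_cases h : ∃ i, vc i = v
    · obtain ⟨i, rfl⟩ := h
      rw [hLc, hHc, Pi.le_def, hclo, hchi]
      fin_cases i <;> (intro j; fin_cases j) <;> norm_num
    · rw [hLr v h, hHr v h, Pi.le_def, hrlo, hrhi]
      intro j
      fin_cases j <;> simp only <;> split_ifs <;> norm_num
  · intro u v huv
    by_cases hu : ∃ i, vc i = u <;> by_cases hv : ∃ i, vc i = v
    · obtain ⟨i, rfl⟩ := hu
      obtain ⟨j, rfl⟩ := hv
      have hij : i ≠ j := fun e => huv (congrArg vc e)
      rw [hLc, hHc, hLc, hHc, box_inter, hcyc, hclo, hchi]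
      exact cyc5 i j hij
    · obtain ⟨i, rfl⟩ := hu
      rw [hLc, hHc, hLr v hv, hHr v hv, box_inter]
      exact hmix i v
    · obtain ⟨j, rfl⟩ := hv
      rw [hLr u hu, hHr u hu, hLc, hHc, box_inter, G.adj_comm, hmix j u]
      constructor <;> (intro h jj; have := h jj; rw [max_comm, min_comm]; linarith [this])
    · have hadj := hclique u v (by simpa [Set.mem_range] using hu)
        (by simpa [Set.mem_range] using hv) huv
      rw [hLr u hu, hHr u hu, hLr v hv, hHr v hv, box_inter]
      simp only [hadj, true_iff, hrlo, hrhi]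
      exact rr5 _ _ _ _ _ _ _ _ _ _

/-- If the vertex set of a finite graph `G` is partitioned into a set
`C = Set.range vc` inducing a chordless cycle of length `4` or `5` (the edges inside `C`
are exactly the consecutive ones along the cycle) and a set `R = (Set.range vc)ᶜ`
inducing a complete graph, then `G` has boxicity at most `3`. -/
theorem boxicity_le_three_cycle_clique {V : Type*} [Fintype V] (G : SimpleGraph V)
    (k : ℕ) (hk : k = 4 ∨ k = 5) (vc : Fin k → V) (hinj : Function.Injective vc)
    (hcyc : ∀ i j : Fin k,
      G.Adj (vc i) (vc j) ↔ (((i : ℕ) + 1) % k = (j : ℕ) ∨ ((j : ℕ) + 1) % k = (i : ℕ)))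
    (hclique : ∀ u w : V, u ∉ Set.range vc → w ∉ Set.range vc → u ≠ w → G.Adj u w) :
    boxicity G ≤ 3 := by
  rcases hk with rfl | rfl
  · exact Nat.sInf_le (aux_box4 G vc hinj hcyc hclique)
  · exact Nat.sInf_le (aux_box5 G vc hinj hcyc hclique)
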